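/- Every Richardson flag (E_k)_{0 ≤ k ≤ r} for X is rational with respect to the standard basis: for each 0 ≤ k ≤ r, the subspace E_k is spanned by a subset of the basis {e(i,j,k)} of V. -/

import Mathlib

/-- Index type of the standard basis `e(i,j,k)`: triples `(i,j,k)` with
`1 ≤ i ≤ j ≤ r`, `1 ≤ k ≤ d j` (so in particular `d j ≠ 0`, i.e. `j ∈ J`). -/
def RIdx (r : ℕ) (d : ℕ → ℕ) : Type :=
  {x : ℕ × ℕ × ℕ //
    1 ≤ x.1 ∧ x.1 ≤ x.2.1 ∧ x.2.1 ≤ r ∧ 1 ≤ x.2.2 ∧ x.2.2 ≤ d x.2.1}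

/-- A Richardson flag for `X`: a chain `0 = E_0 ⊆ E_1 ⊆ ⋯ ⊆ E_r = V` with
`X(E_k) ⊆ E_{k−1}` whose multiset of successive quotient dimensions is
`{Σ_{j≥m} d_j : 1 ≤ m ≤ r}`. -/
def IsRichardsonFlag {F : Type*} [Field F] {V : Type*} [AddCommGroup V] [Module F V]
    (X : V →ₗ[F] V) (r : ℕ) (d : ℕ → ℕ) (E : ℕ → Submodule F V) : Prop :=
  E 0 = ⊥ ∧ E r = ⊤ ∧ (∀ k, k < r → E k ≤ E (k + 1)) ∧
    (∀ k, 1 ≤ k → k ≤ r → ∀ v ∈ E k, X v ∈ E (k - 1)) ∧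
    (Finset.Icc 1 r).val.map
        (fun k => Module.finrank F (E k) - Module.finrank F (E (k - 1))) =
      (Finset.Icc 1 r).val.map (fun m => ∑ j ∈ Finset.Icc m r, d j)

namespace Stmt8

open Module

variable {r : ℕ} {d : ℕ → ℕ}

instance : DecidableEq (RIdx r d) := by unfold RIdx; infer_instance

noncomputable instance : Fintype (RIdx r d) := by
  unfold RIdx
  have hb : ∀ x : {x : ℕ × ℕ × ℕ //
      1 ≤ x.1 ∧ x.1 ≤ x.2.1 ∧ x.2.1 ≤ r ∧ 1 ≤ x.2.2 ∧ x.2.2 ≤ d x.2.1},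
      x.val.1 < r + 1 ∧ x.val.2.1 < r + 1 ∧ x.val.2.2 < (Finset.Icc 1 r).sup d + 1 := by
    intro x
    obtain ⟨h1, h2, h3, h4, h5⟩ := x.prop
    refine ⟨by omega, by omega, ?_⟩
    have : d x.val.2.1 ≤ (Finset.Icc 1 r).sup d :=
      Finset.le_sup (Finset.mem_Icc.2 ⟨by omega, h3⟩)
    omega
  exact Fintype.ofInjective
    (fun x => ((⟨x.val.1, (hb x).1⟩ : Fin (r+1)), (⟨x.val.2.1, (hb x).2.1⟩ : Fin (r+1)),
      (⟨x.val.2.2, (hb x).2.2⟩ : Fin _)))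
    (by
      intro a b hab
      simp only [Prod.mk.injEq, Fin.mk.injEq] at hab
      apply Subtype.ext
      exact Prod.ext hab.1 (Prod.ext hab.2.1 hab.2.2))

/-- The number of basis indices `(i,j,k)` with `i ≤ c j`. -/
noncomputable def NcardF (r : ℕ) (d : ℕ → ℕ) (c : ℕ → ℕ) : ℕ :=
  ((Finset.univ : Finset (RIdx r d)).filter fun x => x.val.1 ≤ c x.val.2.1).card

/-- Successive differences of `NcardF` along adding a constant. -/
noncomputable def DbarF (r : ℕ) (d : ℕ → ℕ) (c : ℕ → ℕ) (u : ℕ) : ℕ :=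
  NcardF r d (fun j => c j + u) - NcardF r d (fun j => c j + u - 1)

lemma NcardF_eq_sum (c : ℕ → ℕ) :
    NcardF r d c = ∑ j ∈ Finset.Icc 1 r, min (c j) j * d j := by
  classical
  have hcard : ∀ j ∈ Finset.Icc 1 r,
      min (c j) j * d j = ((Finset.Icc 1 (min (c j) j)) ×ˢ (Finset.Icc 1 (d j))).card := by
    intro j _; simp [Nat.card_Icc]
  rw [Finset.sum_congr rfl hcard, ← Finset.card_sigma]
  refine Finset.card_bij'
    (fun (x : RIdx r d) _ => (⟨x.val.2.1, (x.val.1, x.val.2.2)⟩ : (j : ℕ) × (ℕ × ℕ)))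
    (fun p hp => (⟨(p.2.1, p.1, p.2.2), by
      simp only [Finset.mem_sigma, Finset.mem_product, Finset.mem_Icc] at hp
      exact ⟨hp.2.1.1, by show p.2.1 ≤ p.1; omega, hp.1.2, hp.2.2.1, hp.2.2.2⟩⟩ : RIdx r d)) ?_ ?_ ?_ ?_
  · intro x hx
    simp only [Finset.mem_filter, Finset.mem_univ, true_and] at hx
    obtain ⟨h1, h2, h3, h4, h5⟩ := x.prop
    simp only [Finset.mem_sigma, Finset.mem_product, Finset.mem_Icc]
    exact ⟨⟨by omega, h3⟩, ⟨h1, by omega⟩, h4, h5⟩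
  · intro p hp
    refine Finset.mem_filter.2 ⟨Finset.mem_univ _, ?_⟩
    show p.2.1 ≤ c p.1
    simp only [Finset.mem_sigma, Finset.mem_product, Finset.mem_Icc] at hp
    omega
  · intro x hx
    apply Subtype.ext
    rfl
  · intro p hp
    rfl

lemma NcardF_congr (c c' : ℕ → ℕ) (h : ∀ j, c j = c' j) : NcardF r d c = NcardF r d c' := by
  unfold NcardF
  congr 1
  apply Finset.filter_congr
  intro x _
  rw [h]

lemma NcardF_mono {c c' : ℕ → ℕ} (h : ∀ j, c j ≤ c' j) : NcardF r d c ≤ NcardF r d c' := by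
  apply Finset.card_le_card
  intro x hx
  simp only [Finset.mem_filter, Finset.mem_univ, true_and] at hx ⊢
  exact le_trans hx (h _)

lemma DbarF_eq_sum (c : ℕ → ℕ) (u : ℕ) (hu : 1 ≤ u) :
    DbarF r d c u = ∑ j ∈ Finset.Icc 1 r, (min (c j + u) j - min (c j + u - 1) j) * d j := by
  have h1 : NcardF r d (fun j => c j + u - 1)
      + ∑ j ∈ Finset.Icc 1 r, (min (c j + u) j - min (c j + u - 1) j) * d j
      = NcardF r d (fun j => c j + u) := by
    rw [NcardF_eq_sum, NcardF_eq_sum, ← Finset.sum_add_distrib]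
    refine Finset.sum_congr rfl fun j _ => ?_
    rw [← Nat.add_mul]
    exact congrArg (· * d j) (by omega)
  unfold DbarF
  omega

lemma NcardF_telescope (c : ℕ → ℕ) (s : ℕ) :
    NcardF r d c + ∑ u ∈ Finset.Icc 1 s, DbarF r d c u = NcardF r d (fun j => c j + s) := by
  induction s with
  | zero =>
    rw [show Finset.Icc 1 0 = (∅ : Finset ℕ) from Finset.Icc_eq_empty (by omega),
      Finset.sum_empty, Nat.add_zero]
    exact NcardF_congr c (fun j => c j + 0) (fun j => rfl)
  | succ s ih =>
    rw [Finset.sum_Icc_succ_top (by omega), ← Nat.add_assoc, ih]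
    have hm : NcardF r d (fun j => c j + s) ≤ NcardF r d (fun j => c j + (s+1)) :=
      NcardF_mono (fun j => by show c j + s ≤ c j + (s+1); omega)
    have hD : DbarF r d c (s+1)
        = NcardF r d (fun j => c j + (s+1)) - NcardF r d (fun j => c j + s) := by
      unfold DbarF
      congr 1
    omega

lemma card_univ_eq : NcardF r d (fun _ => r) = Fintype.card (RIdx r d) := by
  unfold NcardF
  rw [Finset.filter_true_of_mem, Finset.card_univ]
  intro x _
  show x.val.1 ≤ r
  obtain ⟨h1, h2, h3, _, _⟩ := x.prop
  omega

lemma numeric5 (c : ℕ → ℕ) (s : ℕ) :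
    NcardF r d (fun _ => r) + NcardF r d (fun j => min (c j) (j - s))
      ≤ NcardF r d (fun j => c j + s) + NcardF r d (fun j => j - s) := by
  rw [NcardF_eq_sum, NcardF_eq_sum, NcardF_eq_sum, NcardF_eq_sum,
    ← Finset.sum_add_distrib, ← Finset.sum_add_distrib]
  refine Finset.sum_le_sum fun j hj => ?_
  rw [Finset.mem_Icc] at hj
  rw [← Nat.add_mul, ← Nat.add_mul]
  exact Nat.mul_le_mul_right _ (by omega)

lemma Ncard_cprime (c : ℕ → ℕ) (m : ℕ) (hm : 1 ≤ m) :
    NcardF r d (fun j => if c j + m ≤ j then c j + 1 else c j)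
      = NcardF r d c + DbarF r d c m := by
  rw [DbarF_eq_sum c m hm, NcardF_eq_sum, NcardF_eq_sum, ← Finset.sum_add_distrib]
  refine Finset.sum_congr rfl fun j _ => ?_
  rw [← Nat.add_mul]
  refine congrArg (· * d j) ?_
  by_cases h : c j + m ≤ j <;> simp only [h, if_true, if_false] <;> omega

lemma Dbar_cprime_lt (c : ℕ → ℕ) (m u : ℕ) (hu : 1 ≤ u) (hum : u < m) :
    DbarF r d (fun j => if c j + m ≤ j then c j + 1 else c j) u = DbarF r d c u := by
  rw [DbarF_eq_sum _ u hu, DbarF_eq_sum c u hu]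
  refine Finset.sum_congr rfl fun j _ => ?_
  refine congrArg (· * d j) ?_
  by_cases h : c j + m ≤ j <;> simp only [h, if_true, if_false] <;> omega

lemma Dbar_cprime_ge (c : ℕ → ℕ) (m u : ℕ) (hm : 1 ≤ m) (hum : m ≤ u) :
    DbarF r d (fun j => if c j + m ≤ j then c j + 1 else c j) u = DbarF r d c (u + 1) := by
  rw [DbarF_eq_sum _ u (by omega), DbarF_eq_sum c (u+1) (by omega)]
  refine Finset.sum_congr rfl fun j _ => ?_
  refine congrArg (· * d j) ?_
  by_cases h : c j + m ≤ j <;> simp only [h, if_true, if_false] <;> omega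

lemma multiset_update (c : ℕ → ℕ) (n m : ℕ) (hm1 : 1 ≤ m) (hmn : m ≤ n) :
    (Finset.Icc 1 (n-1)).val.map (DbarF r d (fun j => if c j + m ≤ j then c j + 1 else c j))
      = ((Finset.Icc 1 n).val.map (DbarF r d c)).erase (DbarF r d c m) := by
  classical
  have hd1 : Disjoint (Finset.Icc 1 (m-1)) (Finset.Icc m n) := by
    rw [Finset.disjoint_left]
    intro t h1 h2
    rw [Finset.mem_Icc] at h1 h2
    omega
  have hd2 : Disjoint (Finset.Icc 1 (m-1)) (Finset.Icc m (n-1)) := by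
    rw [Finset.disjoint_left]
    intro t h1 h2
    rw [Finset.mem_Icc] at h1 h2
    omega
  have h1 : (Finset.Icc 1 n).val = (Finset.Icc 1 (m-1)).val + (Finset.Icc m n).val := by
    have : Finset.Icc 1 n = (Finset.Icc 1 (m-1)).disjUnion (Finset.Icc m n) hd1 := by
      ext t
      simp only [Finset.mem_Icc, Finset.mem_disjUnion]
      omega
    rw [this]
    rfl
  have h2 : (Finset.Icc 1 (n-1)).val = (Finset.Icc 1 (m-1)).val + (Finset.Icc m (n-1)).val := by
    have : Finset.Icc 1 (n-1) = (Finset.Icc 1 (m-1)).disjUnion (Finset.Icc m (n-1)) hd2 := by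
      ext t
      simp only [Finset.mem_Icc, Finset.mem_disjUnion]
      omega
    rw [this]
    rfl
  have h3 : (Finset.Icc m n).val = m ::ₘ (Finset.Icc (m+1) n).val := by
    have hmem : m ∉ Finset.Icc (m+1) n := by
      rw [Finset.mem_Icc]; omega
    have : Finset.Icc m n = Finset.cons m (Finset.Icc (m+1) n) hmem := by
      ext t
      simp only [Finset.mem_Icc, Finset.mem_cons]
      omega
    rw [this]
    rfl
  have h4 : (Finset.Icc m (n-1)).val.map (fun u => u + 1) = (Finset.Icc (m+1) n).val := by
    have h7 := Finset.map_add_right_Icc m (n-1) 1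
    rw [show (n - 1) + 1 = n by omega] at h7
    rw [← h7, Finset.map_val]
    rfl
  rw [h1, h2, Multiset.map_add, Multiset.map_add]
  have h5 : (Finset.Icc 1 (m-1)).val.map
      (DbarF r d (fun j => if c j + m ≤ j then c j + 1 else c j))
      = (Finset.Icc 1 (m-1)).val.map (DbarF r d c) := by
    refine Multiset.map_congr rfl fun u hu => ?_
    have : u ∈ Finset.Icc 1 (m-1) := hu
    rw [Finset.mem_Icc] at this
    exact Dbar_cprime_lt c m u (by omega) (by omega)
  have h6 : (Finset.Icc m (n-1)).val.map
      (DbarF r d (fun j => if c j + m ≤ j then c j + 1 else c j))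
      = (Finset.Icc (m+1) n).val.map (DbarF r d c) := by
    have : (Finset.Icc m (n-1)).val.map
        (DbarF r d (fun j => if c j + m ≤ j then c j + 1 else c j))
        = (Finset.Icc m (n-1)).val.map (fun u => DbarF r d c (u + 1)) := by
      refine Multiset.map_congr rfl fun u hu => ?_
      have : u ∈ Finset.Icc m (n-1) := hu
      rw [Finset.mem_Icc] at this
      exact Dbar_cprime_ge c m u hm1 (by omega)
    rw [this, ← h4, Multiset.map_map]
    rfl
  rw [h5, h6, h3, Multiset.map_cons]
  rw [show (Finset.Icc 1 (m-1)).val.map (DbarF r d c)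
      + (DbarF r d c m ::ₘ (Finset.Icc (m+1) n).val.map (DbarF r d c))
      = DbarF r d c m ::ₘ ((Finset.Icc 1 (m-1)).val.map (DbarF r d c)
        + (Finset.Icc (m+1) n).val.map (DbarF r d c)) by
    rw [add_comm, Multiset.cons_add, add_comm]]
  rw [Multiset.erase_cons_head]

lemma exists_sub_multiset {α β : Type*} [DecidableEq α] [DecidableEq β] :
    ∀ (u : Multiset β) (s : Multiset α) (f : α → β), u ≤ s.map f → ∃ t ≤ s, t.map f = u := by
  intro u
  induction u using Multiset.induction with
  | empty => exact fun s f _ => ⟨0, Multiset.zero_le _, rfl⟩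
  | cons a u ih =>
    intro s f h
    have ha : a ∈ s.map f := Multiset.mem_of_le h (Multiset.mem_cons_self a u)
    obtain ⟨x, hx, hfx⟩ := Multiset.mem_map.1 ha
    have hmapsub : (s.map f).erase a = (s.erase x).map f := by
      conv_lhs => rw [← Multiset.cons_erase hx]
      rw [Multiset.map_cons, hfx, Multiset.erase_cons_head]
    have h2 : u ≤ (s.erase x).map f := by
      rw [← hmapsub]
      have := Multiset.erase_le_erase a h
      rwa [Multiset.erase_cons_head] at this
    obtain ⟨t, ht, hmap⟩ := ih (s.erase x) f h2
    refine ⟨x ::ₘ t, ?_, by rw [Multiset.map_cons, hmap, hfx]⟩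
    calc x ::ₘ t ≤ x ::ₘ s.erase x := Multiset.cons_le_cons _ ht
    _ = s := Multiset.cons_erase hx


lemma le_erase_of_add_singleton_le {α : Type*} [DecidableEq α] {u M : Multiset α} {a : α}
    (h : u + {a} ≤ M) : u ≤ M.erase a := by
  rw [Multiset.le_iff_count]
  intro b
  have hc := Multiset.le_iff_count.1 h b
  rw [Multiset.count_add, Multiset.count_singleton] at hc
  by_cases hb : b = a
  · subst hb
    rw [Multiset.count_erase_self]
    simp at hc
    omega
  · rw [Multiset.count_erase_of_ne hb]
    simp only [if_neg hb] at hc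
    omega

lemma Dbar_zero (m : ℕ) (hm1 : 1 ≤ m) :
    DbarF r d (fun _ => 0) m = ∑ j ∈ Finset.Icc m r, d j := by
  have h1 : DbarF r d (fun _ => (0:ℕ)) m
      = ∑ j ∈ Finset.Icc 1 r, (if m ≤ j then d j else 0) := by
    rw [DbarF_eq_sum _ m hm1]
    refine Finset.sum_congr rfl fun j hj => ?_
    rw [Finset.mem_Icc] at hj
    by_cases h : m ≤ j
    · rw [if_pos h,
        show min ((fun _ => (0:ℕ)) j + m) j - min ((fun _ => (0:ℕ)) j + m - 1) j = 1 from by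
          show min (0 + m) j - min (0 + m - 1) j = 1
          omega, one_mul]
    · rw [if_neg h,
        show min ((fun _ => (0:ℕ)) j + m) j - min ((fun _ => (0:ℕ)) j + m - 1) j = 0 from by
          show min (0 + m) j - min (0 + m - 1) j = 0
          omega, zero_mul]
  rw [h1, ← Finset.sum_filter]
  have h2 : (Finset.Icc 1 r).filter (fun j => m ≤ j) = Finset.Icc m r := by
    ext j
    simp only [Finset.mem_filter, Finset.mem_Icc]
    omega
  rw [h2]

noncomputable def afF {F : Type*} [Field F] {V : Type*} [AddCommGroup V] [Module F V]
    (E : ℕ → Submodule F V) (t : ℕ) : ℕ :=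
  Module.finrank F (E t) - Module.finrank F (E (t - 1))

section Geometry

variable {F : Type*} [Field F] {V : Type*} [AddCommGroup V] [Module F V]

/-- The span of the basis vectors `e(i,j,k)` with `i ≤ c j`. -/
def Fc (e : Basis (RIdx r d) F V) (c : ℕ → ℕ) : Submodule F V :=
  Submodule.span F (e '' {x : RIdx r d | x.val.1 ≤ c x.val.2.1})

variable (e : Basis (RIdx r d) F V) (X : V →ₗ[F] V)

lemma mem_Fc {c : ℕ → ℕ} {v : V} :
    v ∈ Fc e c ↔ ∀ x : RIdx r d, ¬ x.val.1 ≤ c x.val.2.1 → e.repr v x = 0 := by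
  rw [Fc, Basis.mem_span_image]
  constructor
  · intro h x hx
    by_contra h0
    exact hx (h (Finsupp.mem_support_iff.2 h0))
  · intro h i hi
    by_contra hx
    exact (Finsupp.mem_support_iff.1 hi) (h i hx)

lemma Fc_congr {c c' : ℕ → ℕ} (h : ∀ j, c j = c' j) : Fc e c = Fc e c' := by
  unfold Fc
  congr 1
  congr 1
  ext x
  simp [h]

lemma Fc_inf (c c' : ℕ → ℕ) :
    Fc e c ⊓ Fc e c' = Fc e (fun j => min (c j) (c' j)) := by
  ext v
  simp only [Submodule.mem_inf, mem_Fc]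
  constructor
  · rintro ⟨h1, h2⟩ x hx
    beta_reduce at hx
    by_cases hc : x.val.1 ≤ c x.val.2.1
    · exact h2 x (by omega)
    · exact h1 x hc
  · intro h
    refine ⟨fun x hx => h x ?_, fun x hx => h x ?_⟩ <;> beta_reduce <;> omega

lemma Fc_sup (c c' : ℕ → ℕ) :
    Fc e c ⊔ Fc e c' = Fc e (fun j => max (c j) (c' j)) := by
  have hset : ({x : RIdx r d | x.val.1 ≤ c x.val.2.1} ∪ {x : RIdx r d | x.val.1 ≤ c' x.val.2.1})
      = {x : RIdx r d | x.val.1 ≤ (fun j => max (c j) (c' j)) x.val.2.1} := by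
    ext x
    show x.val.1 ≤ c x.val.2.1 ∨ x.val.1 ≤ c' x.val.2.1
      ↔ x.val.1 ≤ max (c x.val.2.1) (c' x.val.2.1)
    omega
  unfold Fc
  rw [← Submodule.span_union, ← Set.image_union, hset]

lemma Fc_bot : Fc e (fun _ => 0) = ⊥ := by
  unfold Fc
  have : {x : RIdx r d | x.val.1 ≤ 0} = ∅ := by
    ext x
    simp only [Set.mem_setOf_eq, Set.mem_empty_iff_false, iff_false]
    obtain ⟨h1, _⟩ := x.prop
    omega
  rw [this, Set.image_empty, Submodule.span_empty]

lemma finrank_Fc (c : ℕ → ℕ) : finrank F (Fc e c) = NcardF r d c := by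
  classical
  have hset : ({x : RIdx r d | x.val.1 ≤ c x.val.2.1} : Set (RIdx r d))
      = ↑((Finset.univ : Finset (RIdx r d)).filter fun x => x.val.1 ≤ c x.val.2.1) := by
    ext x; simp
  rw [Fc, NcardF, hset]
  set s := (Finset.univ : Finset (RIdx r d)).filter fun x => x.val.1 ≤ c x.val.2.1 with hs
  rw [Set.image_eq_range]
  have hli : LinearIndependent F (fun x : (↑(s : Set (RIdx r d)) : Type _) => e ↑x) :=
    e.linearIndependent.comp _ Subtype.val_injective
  rw [finrank_span_eq_card hli]
  simp

variable (hX0 : ∀ x : RIdx r d, x.val.1 = 1 → X (e x) = 0)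
  (hXs : ∀ x y : RIdx r d, x.val.1 = y.val.1 + 1 → x.val.2 = y.val.2 → X (e x) = e y)

include hX0 hXs

lemma Xpow_e_zero (s : ℕ) (x : RIdx r d) (hx : x.val.1 ≤ s) : (X ^ s) (e x) = 0 := by
  induction s generalizing x with
  | zero => exact absurd hx (by obtain ⟨h1, _⟩ := x.prop; omega)
  | succ s ih =>
    rw [pow_succ, Module.End.mul_apply]
    by_cases h1 : x.val.1 = 1
    · rw [hX0 x h1, map_zero]
    · obtain ⟨hp1, hp2, hp3, hp4, hp5⟩ := x.prop
      rw [hXs x ⟨(x.val.1 - 1, x.val.2),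
        ⟨by show 1 ≤ x.val.1 - 1; omega, by show x.val.1 - 1 ≤ x.val.2.1; omega, hp3, hp4, hp5⟩⟩
        (by show x.val.1 = x.val.1 - 1 + 1; omega) rfl]
      exact ih _ (by show x.val.1 - 1 ≤ s; omega)

lemma Xpow_e_shift (s : ℕ) (x y : RIdx r d) (h1 : x.val.1 = y.val.1 + s)
    (h2 : x.val.2 = y.val.2) : (X ^ s) (e x) = e y := by
  induction s generalizing x with
  | zero =>
    have hxy : x = y := Subtype.ext (Prod.ext (by omega) h2)
    rw [pow_zero, Module.End.one_apply, hxy]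
  | succ s ih =>
    rw [pow_succ, Module.End.mul_apply]
    obtain ⟨hp1, hp2, hp3, hp4, hp5⟩ := x.prop
    obtain ⟨hq1, _⟩ := y.prop
    rw [hXs x ⟨(x.val.1 - 1, x.val.2),
      ⟨by show 1 ≤ x.val.1 - 1; omega, by show x.val.1 - 1 ≤ x.val.2.1; omega, hp3, hp4, hp5⟩⟩
      (by show x.val.1 = x.val.1 - 1 + 1; omega) rfl]
    exact ih _ (by show x.val.1 - 1 = y.val.1 + s; omega) h2

lemma range_Xpow (s : ℕ) :
    LinearMap.range (X ^ s) = Fc e (fun j => j - s) := by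
  apply le_antisymm
  · rw [LinearMap.range_eq_map, ← Basis.span_eq e, Submodule.map_span, Submodule.span_le]
    rintro _ ⟨_, ⟨x, rfl⟩, rfl⟩
    by_cases hx : x.val.1 ≤ s
    · rw [Xpow_e_zero e X hX0 hXs s x hx]
      exact Submodule.zero_mem _
    · obtain ⟨hp1, hp2, hp3, hp4, hp5⟩ := x.prop
      rw [Xpow_e_shift e X hX0 hXs s x ⟨(x.val.1 - s, x.val.2),
        ⟨by show 1 ≤ x.val.1 - s; omega, by show x.val.1 - s ≤ x.val.2.1; omega, hp3, hp4, hp5⟩⟩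
        (by show x.val.1 = x.val.1 - s + s; omega) rfl]
      refine Submodule.subset_span ⟨_, ?_, rfl⟩
      show x.val.1 - s ≤ x.val.2.1 - s
      omega
  · rw [Fc, Submodule.span_le]
    rintro _ ⟨y, hy, rfl⟩
    simp only [Set.mem_setOf_eq] at hy
    obtain ⟨h1, h2, h3, h4, h5⟩ := y.prop
    refine ⟨e ⟨(y.val.1 + s, y.val.2),
      ⟨by show 1 ≤ y.val.1 + s; omega, by show y.val.1 + s ≤ y.val.2.1; omega, h3, h4, h5⟩⟩, ?_⟩
    exact Xpow_e_shift e X hX0 hXs s _ y rfl rfl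

lemma repr_X_apply (v : V) (x y : RIdx r d) (h1 : x.val.1 = y.val.1 + 1)
    (h2 : x.val.2 = y.val.2) : e.repr (X v) y = e.repr v x := by
  classical
  have hv : X v = ∑ i : RIdx r d, e.repr v i • X (e i) := by
    conv_lhs => rw [← e.sum_repr v]
    rw [map_sum]
    simp_rw [map_smul]
  rw [hv, map_sum, Finsupp.finset_sum_apply]
  rw [Finset.sum_eq_single x]
  · rw [hXs x y h1 h2, map_smul, Finsupp.smul_apply, Basis.repr_self,
      Finsupp.single_eq_same, smul_eq_mul, mul_one]
  · intro i _ hix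
    by_cases hi1 : i.val.1 = 1
    · rw [hX0 i hi1]
      simp
    · obtain ⟨hp1, hp2, hp3, hp4, hp5⟩ := i.prop
      rw [hXs i ⟨(i.val.1 - 1, i.val.2),
        ⟨by show 1 ≤ i.val.1 - 1; omega, by show i.val.1 - 1 ≤ i.val.2.1; omega, hp3, hp4, hp5⟩⟩
        (by show i.val.1 = i.val.1 - 1 + 1; omega) rfl]
      erw [map_smul, Finsupp.smul_apply, Basis.repr_self]
      erw [Finsupp.single_eq_of_ne', smul_zero]
      intro hne
      apply hix
      have hval : (i.val.1 - 1, i.val.2) = y.val := congrArg Subtype.val hne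
      have hv1 : i.val.1 - 1 = y.val.1 := (Prod.ext_iff.1 hval).1
      have hv2 : i.val.2 = y.val.2 := (Prod.ext_iff.1 hval).2
      apply Subtype.ext
      apply Prod.ext
      · omega
      · rw [hv2, ← h2]
  · intro hx
    exact absurd (Finset.mem_univ x) hx

lemma comap_X_Fc (c : ℕ → ℕ) :
    Submodule.comap X (Fc e c) = Fc e (fun j => c j + 1) := by
  apply le_antisymm
  · intro v hv
    rw [Submodule.mem_comap] at hv
    rw [mem_Fc]
    intro x hx
    beta_reduce at hx
    obtain ⟨hp1, hp2, hp3, hp4, hp5⟩ := x.prop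
    have hrepr := repr_X_apply e X hX0 hXs v x ⟨(x.val.1 - 1, x.val.2),
      ⟨by show 1 ≤ x.val.1 - 1; omega, by show x.val.1 - 1 ≤ x.val.2.1; omega, hp3, hp4, hp5⟩⟩
      (by show x.val.1 = x.val.1 - 1 + 1; omega) rfl
    rw [← hrepr]
    refine (mem_Fc e).1 hv _ ?_
    show ¬ x.val.1 - 1 ≤ c x.val.2.1
    omega
  · rw [Fc, Submodule.span_le]
    rintro _ ⟨x, hx, rfl⟩
    simp only [Set.mem_setOf_eq] at hx
    simp only [SetLike.mem_coe, Submodule.mem_comap]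
    by_cases h1 : x.val.1 = 1
    · rw [hX0 x h1]
      exact Submodule.zero_mem _
    · obtain ⟨hp1, hp2, hp3, hp4, hp5⟩ := x.prop
      rw [hXs x ⟨(x.val.1 - 1, x.val.2),
        ⟨by show 1 ≤ x.val.1 - 1; omega, by show x.val.1 - 1 ≤ x.val.2.1; omega, hp3, hp4, hp5⟩⟩
        (by show x.val.1 = x.val.1 - 1 + 1; omega) rfl]
      refine Submodule.subset_span ⟨_, ?_, rfl⟩
      show x.val.1 - 1 ≤ c x.val.2.1
      beta_reduce at hx
      omega

end Geometry

section Ranks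

variable {F : Type*} [Field F] {V : Type*} [AddCommGroup V] [Module F V]
  [FiniteDimensional F V]

lemma finrank_comap_subtype (W q : Submodule F V) :
    finrank F (Submodule.comap W.subtype q) = finrank F (q ⊓ W : Submodule F V) := by
  have h : Submodule.comap W.subtype q = Submodule.comap W.subtype (q ⊓ W) := by
    ext x
    simp only [Submodule.mem_comap, Submodule.mem_inf]
    exact ⟨fun hq => ⟨hq, x.prop⟩, fun hq => hq.1⟩
  rw [h]
  exact (Submodule.comapSubtypeEquivOfLe inf_le_right).finrank_eq

lemma rank_nullity_W (f : V →ₗ[F] V) (W : Submodule F V) :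
    finrank F W = finrank F (Submodule.map f W)
      + finrank F (LinearMap.ker f ⊓ W : Submodule F V) := by
  have h := LinearMap.finrank_range_add_finrank_ker (f.domRestrict W)
  rw [LinearMap.range_domRestrict, LinearMap.ker_domRestrict] at h
  rw [finrank_comap_subtype W (LinearMap.ker f)] at h
  omega

lemma rk_comap_inf (f : V →ₗ[F] V) (N P : Submodule F V) :
    finrank F (Submodule.comap f N ⊓ P : Submodule F V) + finrank F (Submodule.map f P)
      = finrank F (N ⊓ Submodule.map f P : Submodule F V) + finrank F P := by
  have hmap : Submodule.map f (Submodule.comap f N ⊓ P) = N ⊓ Submodule.map f P := by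
    apply le_antisymm
    · rintro _ ⟨x, ⟨hxN, hxP⟩, rfl⟩
      exact ⟨hxN, ⟨x, hxP, rfl⟩⟩
    · rintro y ⟨hyN, x, hxP, rfl⟩
      exact ⟨x, ⟨hyN, hxP⟩, rfl⟩
  have hker : LinearMap.ker f ⊓ (Submodule.comap f N ⊓ P) = LinearMap.ker f ⊓ P := by
    apply le_antisymm
    · exact inf_le_inf_left _ inf_le_right
    · rintro x ⟨hk, hp⟩
      have hx0 : f x = 0 := hk
      refine ⟨hk, ⟨?_, hp⟩⟩
      show f x ∈ N
      rw [hx0]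
      exact N.zero_mem
  have h1 := rank_nullity_W f (Submodule.comap f N ⊓ P)
  have h2 := rank_nullity_W f P
  rw [hmap, hker] at h1
  omega

lemma rank_inf_le (Q N M' : Submodule F V) (h : M' ≤ Q) :
    finrank F (N ⊓ Q : Submodule F V) + finrank F M'
      ≤ finrank F (N ⊓ M' : Submodule F V) + finrank F Q := by
  have heq := Submodule.finrank_sup_add_finrank_inf_eq (N ⊓ Q) M'
  have hle : (N ⊓ Q) ⊔ M' ≤ Q := sup_le inf_le_right h
  have h2 : (N ⊓ Q) ⊓ M' = N ⊓ M' := by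
    apply le_antisymm
    · exact le_inf (le_trans inf_le_left inf_le_left) inf_le_right
    · exact le_inf (le_inf inf_le_left (le_trans inf_le_right h)) inf_le_right
  have h3 : finrank F ((N ⊓ Q) ⊔ M' : Submodule F V) ≤ finrank F Q :=
    Submodule.finrank_mono hle
  rw [h2] at heq
  omega

lemma rank_step (X : V →ₗ[F] V) (N P Q : Submodule F V) (hPQ : Submodule.map X P ≤ Q) :
    finrank F (N ⊓ Q : Submodule F V) + finrank F P
      ≤ finrank F (Submodule.comap X N ⊓ P : Submodule F V) + finrank F Q := by
  have h1 := rk_comap_inf X N P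
  have h2 := rank_inf_le Q N (Submodule.map X P) hPQ
  omega

lemma lemD (X : V →ₗ[F] V) : ∀ (n : ℕ) (G : ℕ → Submodule F V) (a : ℕ → ℕ),
    (∀ t, 1 ≤ t → t ≤ n → Submodule.map X (G t) ≤ G (t-1)) →
    (∀ t, 1 ≤ t → t ≤ n → G (t-1) ≤ G t) →
    (∀ t, 1 ≤ t → t ≤ n → finrank F (G t) = finrank F (G (t-1)) + a t) →
    ∀ S : Finset ℕ, S ⊆ Finset.Icc 1 n →
      finrank F (G 0) + ∑ t ∈ S, a t
        ≤ finrank F (Submodule.comap (X ^ S.card) (G 0) ⊓ G n : Submodule F V) := by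
  intro n
  induction n with
  | zero =>
    intro G a _ _ _ S hS
    have hSempty : S = ∅ := by
      rw [← Finset.subset_empty]
      simpa using hS
    subst hSempty
    simp only [Finset.sum_empty, Finset.card_empty, Nat.add_zero]
    have hc : Submodule.comap (X ^ (0:ℕ)) (G 0) = G 0 := by
      ext v
      simp [Submodule.mem_comap]
    show finrank F (G 0) ≤ finrank F (Submodule.comap (X ^ (0:ℕ)) (G 0) ⊓ G 0 : Submodule F V)
    rw [hc, inf_idem]
  | succ n ih =>
    intro G a hmap hmono ha S hS
    by_cases hn : n + 1 ∈ S
    · set S' := S.erase (n+1) with hS'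
      have hsub : S' ⊆ Finset.Icc 1 n := by
        intro t ht
        have h1 := Finset.mem_of_mem_erase ht
        have h2 := Finset.ne_of_mem_erase ht
        have h3 := hS h1
        rw [Finset.mem_Icc] at h3 ⊢
        omega
      have hIH := ih G a (fun t ht1 ht2 => hmap t ht1 (by omega))
        (fun t ht1 ht2 => hmono t ht1 (by omega))
        (fun t ht1 ht2 => ha t ht1 (by omega)) S' hsub
      have hcard : S.card = S'.card + 1 := by
        rw [hS', Finset.card_erase_of_mem hn]
        have : 1 ≤ S.card := Finset.card_pos.2 ⟨_, hn⟩
        omega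
      have hsum : ∑ t ∈ S, a t = ∑ t ∈ S', a t + a (n+1) := by
        rw [hS']
        exact (Finset.sum_erase_add S a hn).symm
      have hstep := rank_step X (Submodule.comap (X ^ S'.card) (G 0)) (G (n+1)) (G n)
        (hmap (n+1) (by omega) (by omega))
      have hcomap : Submodule.comap X (Submodule.comap (X ^ S'.card) (G 0))
          = Submodule.comap (X ^ S.card) (G 0) := by
        rw [hcard, pow_succ, Module.End.mul_eq_comp, Submodule.comap_comp]
      have hA : finrank F (G (n+1)) = finrank F (G n) + a (n+1) :=
        ha (n+1) (by omega) (by omega)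
      rw [hcomap] at hstep
      omega
    · have hsub : S ⊆ Finset.Icc 1 n := by
        intro t ht
        have h3 := hS ht
        rw [Finset.mem_Icc] at h3 ⊢
        have : t ≠ n + 1 := fun h => hn (h ▸ ht)
        omega
      have hIH := ih G a (fun t ht1 ht2 => hmap t ht1 (by omega))
        (fun t ht1 ht2 => hmono t ht1 (by omega))
        (fun t ht1 ht2 => ha t ht1 (by omega)) S hsub
      refine le_trans hIH (Submodule.finrank_mono ?_)
      refine inf_le_inf_left _ ?_
      exact hmono (n+1) (by omega) (by omega)

end Ranks

end Stmt8

/-- every Richardson flag for `X` is rational with respect to the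
standard basis: each `E_k` is the span of a subset of the basis vectors. -/
theorem stmt_8 (r : ℕ) (hr : 1 ≤ r) (d : ℕ → ℕ) (hd : 1 ≤ d r)
    (F : Type*) [Field F] [CharZero F] (V : Type*) [AddCommGroup V] [Module F V]
    (e : Module.Basis (RIdx r d) F V) (X : V →ₗ[F] V)
    (hX0 : ∀ x : RIdx r d, x.val.1 = 1 → X (e x) = 0)
    (hXs : ∀ x y : RIdx r d, x.val.1 = y.val.1 + 1 → x.val.2 = y.val.2 →
      X (e x) = e y)
    (E : ℕ → Submodule F V) (hE : IsRichardsonFlag X r d E) :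
    ∀ k ≤ r, ∃ s : Set (RIdx r d), E k = Submodule.span F (e '' s) := by
  classical
  obtain ⟨hE0, hEr, hEmono, hEX, hEmul⟩ := hE
  haveI : FiniteDimensional F V := Module.Finite.of_basis e
  set af : ℕ → ℕ := Stmt8.afF E with haf
  have haf1 : ∀ t, af t = Module.finrank F (E t) - Module.finrank F (E (t - 1)) :=
    fun t => rfl
  have hEmul : (Finset.Icc 1 r).val.map af
      = (Finset.Icc 1 r).val.map (fun m => ∑ j ∈ Finset.Icc m r, d j) := hEmul
  open Module Stmt8 in
  have main : ∀ k, k ≤ r → ∃ c : ℕ → ℕ, E k = Stmt8.Fc e c ∧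
      (Finset.Icc (k+1) r).val.map af
        = (Finset.Icc 1 (r - k)).val.map (Stmt8.DbarF r d c) := by
    intro k
    induction k with
    | zero =>
      intro _
      refine ⟨fun _ => 0, by rw [hE0, Stmt8.Fc_bot], ?_⟩
      rw [show (0:ℕ)+1 = 1 from rfl, Nat.sub_zero, hEmul]
      refine Multiset.map_congr rfl fun m hm => ?_
      have hm' : m ∈ Finset.Icc 1 r := hm
      rw [Finset.mem_Icc] at hm'
      exact (Stmt8.Dbar_zero m (by omega)).symm
    | succ k ihk =>
      intro hk1
      obtain ⟨c, hEk, hmul⟩ := ihk (by omega)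
      have hmem : af (k+1) ∈ (Finset.Icc 1 (r-k)).val.map (Stmt8.DbarF r d c) := by
        rw [← hmul]
        exact Multiset.mem_map_of_mem af (Finset.mem_def.1 (Finset.mem_Icc.2 ⟨le_refl _, hk1⟩))
      obtain ⟨m, hmIcc, hma⟩ := Multiset.mem_map.1 hmem
      have hm1n : 1 ≤ m ∧ m ≤ r - k := by
        have h0 : m ∈ Finset.Icc 1 (r-k) := hmIcc
        rwa [Finset.mem_Icc] at h0
      set s := m - 1 with hs
      have hcons : (Finset.Icc (k+1) r).val = (k+1) ::ₘ (Finset.Icc (k+2) r).val := by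
        have hne : (k+1) ∉ Finset.Icc (k+2) r := by rw [Finset.mem_Icc]; omega
        have h0 : Finset.Icc (k+1) r = Finset.cons (k+1) (Finset.Icc (k+2) r) hne := by
          ext t
          simp only [Finset.mem_Icc, Finset.mem_cons]
          omega
        rw [h0]
        rfl
      have hrest : (Finset.Icc (k+2) r).val.map af
          = ((Finset.Icc 1 (r-k)).val.map (Stmt8.DbarF r d c)).erase (Stmt8.DbarF r d c m) := by
        rw [← hmul, hcons, Multiset.map_cons, ← hma, Multiset.erase_cons_head]
      have hrkB : Module.finrank F (E k) = Stmt8.NcardF r d c := by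
        rw [hEk, Stmt8.finrank_Fc]
      have hBA : E k ≤ E (k+1) := hEmono k (by omega)
      have hrkA : Module.finrank F (E (k+1)) = Module.finrank F (E k) + af (k+1) := by
        have h0 := Submodule.finrank_mono hBA
        have h2 : af (k+1)
            = Module.finrank F (E (k+1)) - Module.finrank F (E k) := haf1 (k+1)
        omega
      -- step 1 : the key inequality from lemD
      have hsub1 : (Finset.Icc 1 s).val.map (Stmt8.DbarF r d c) + {Stmt8.DbarF r d c m}
          ≤ (Finset.Icc 1 (r-k)).val.map (Stmt8.DbarF r d c) := by
        have hdisj : Disjoint (Finset.Icc 1 s) ({m} : Finset ℕ) := by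
          rw [Finset.disjoint_singleton_right, Finset.mem_Icc]
          omega
        have hicc : Finset.Icc 1 m = (Finset.Icc 1 s).disjUnion {m} hdisj := by
          ext t
          simp only [Finset.mem_Icc, Finset.mem_disjUnion, Finset.mem_singleton]
          omega
        have hval : (Finset.Icc 1 m).val = (Finset.Icc 1 s).val + {m} := by rw [hicc]; rfl
        have h0 : (Finset.Icc 1 s).val.map (Stmt8.DbarF r d c) + {Stmt8.DbarF r d c m}
            = (Finset.Icc 1 m).val.map (Stmt8.DbarF r d c) := by
          rw [hval, Multiset.map_add]
          rfl
        rw [h0]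
        apply Multiset.map_le_map
        rw [Finset.val_le_iff]
        exact Finset.Icc_subset_Icc_right (by omega)
      have hsub2 : (Finset.Icc 1 s).val.map (Stmt8.DbarF r d c)
          ≤ (Finset.Icc (k+2) r).val.map af := by
        rw [hrest]
        exact Stmt8.le_erase_of_add_singleton_le hsub1
      have hre : (Finset.Icc (k+2) r).val.map af
          = (Finset.Icc 1 (r-k-1)).val.map (fun t => af (t + (k+1))) := by
        have h7 := Finset.map_add_right_Icc 1 (r-k-1) (k+1)
        rw [show 1 + (k+1) = k+2 by omega, show r-k-1 + (k+1) = r by omega] at h7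
        rw [← h7, Finset.map_val, Multiset.map_map]
        rfl
      have hsub2' : (Finset.Icc 1 s).val.map (Stmt8.DbarF r d c)
          ≤ (Finset.Icc 1 (r-k-1)).val.map (fun t => af (t + (k+1))) := by
        rw [← hre]
        exact hsub2
      obtain ⟨tms, htle, htmap⟩ := Stmt8.exists_sub_multiset _ _ _ hsub2'
      have hnod : tms.Nodup := Multiset.nodup_of_le htle (Finset.Icc 1 (r-k-1)).nodup
      set S : Finset ℕ := ⟨tms, hnod⟩ with hSdef
      have hSsub : S ⊆ Finset.Icc 1 (r-k-1) := fun t ht => Multiset.mem_of_le htle ht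
      have hScard : S.card = s := by
        have h8 := congrArg Multiset.card htmap
        rw [Multiset.card_map, Multiset.card_map] at h8
        show tms.card = s
        rw [h8]
        simp [Nat.card_Icc]
      have hSsum : ∑ t ∈ S, af (t + (k+1)) = ∑ u ∈ Finset.Icc 1 s, Stmt8.DbarF r d c u := by
        have h9 : (tms.map (fun t => af (t + (k+1)))).sum
            = ((Finset.Icc 1 s).val.map (Stmt8.DbarF r d c)).sum := by rw [htmap]
        exact h9
      have hchain := Stmt8.lemD X (r-k-1) (fun t => E (k+1+t)) (fun t => af (t + (k+1)))
        (by
          intro t ht1 ht2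
          rw [Submodule.map_le_iff_le_comap]
          intro v hv
          have h10 := hEX (k+1+t) (by omega) (by omega) v hv
          show X v ∈ E (k+1+(t-1))
          rw [show k+1+(t-1) = k+1+t-1 by omega]
          exact h10)
        (by
          intro t ht1 ht2
          have h0 := hEmono (k+1+(t-1)) (by omega)
          rwa [show k+1+(t-1)+1 = k+1+t by omega] at h0)
        (by
          intro t ht1 ht2
          have h11 := haf1 (t+(k+1))
          have h12 : E (t+(k+1)-1) ≤ E (t+(k+1)) := by
            have h0 := hEmono (t+(k+1)-1) (by omega)
            rwa [show t+(k+1)-1+1 = t+(k+1) by omega] at h0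
          have h13 := Submodule.finrank_mono h12
          show Module.finrank F (E (k+1+t))
            = Module.finrank F (E (k+1+(t-1))) + af (t+(k+1))
          rw [show k+1+t = t+(k+1) by omega, show k+1+(t-1) = t+(k+1)-1 by omega]
          omega)
        S hSsub
      simp only [Nat.add_zero] at hchain
      rw [show k+1+(r-k-1) = r by omega, hEr, hScard, hSsum] at hchain
      -- ranks juggling
      have hrange : LinearMap.range (X ^ s) = Stmt8.Fc e (fun j => j - s) :=
        Stmt8.range_Xpow e X hX0 hXs s
      have h2 := Stmt8.rk_comap_inf (X ^ s) (E (k+1)) (⊤ : Submodule F V)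
      rw [Submodule.map_top] at h2
      have h4 : Module.finrank F (E (k+1) ⊓ LinearMap.range (X ^ s) : Submodule F V)
            + Module.finrank F (E k)
          ≤ Module.finrank F (E (k+1) ⊓ (LinearMap.range (X ^ s) ⊔ E k) : Submodule F V)
            + Module.finrank F (E k ⊓ LinearMap.range (X ^ s) : Submodule F V) := by
        have heq := Submodule.finrank_sup_add_finrank_inf_eq
          (E (k+1) ⊓ LinearMap.range (X ^ s)) (E k)
        have hle : (E (k+1) ⊓ LinearMap.range (X ^ s)) ⊔ E k
            ≤ E (k+1) ⊓ (LinearMap.range (X ^ s) ⊔ E k) :=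
          sup_le (le_inf inf_le_left (le_trans inf_le_right le_sup_left))
            (le_inf hBA le_sup_right)
        have hle2 := Submodule.finrank_mono hle
        have heq2 : (E (k+1) ⊓ LinearMap.range (X ^ s)) ⊓ E k
            = E k ⊓ LinearMap.range (X ^ s) := by
          apply le_antisymm
          · exact le_inf inf_le_right (le_trans inf_le_left inf_le_right)
          · exact le_inf (le_inf (le_trans inf_le_left hBA) inf_le_right) inf_le_left
        rw [heq2] at heq
        omega
      have htop : Module.finrank F (⊤ : Submodule F V) = Stmt8.NcardF r d (fun _ => r) := by
        rw [finrank_top, Module.finrank_eq_card_basis e, Stmt8.card_univ_eq]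
      have hBR : Module.finrank F (E k ⊓ LinearMap.range (X ^ s) : Submodule F V)
          = Stmt8.NcardF r d (fun j => min (c j) (j - s)) := by
        rw [hEk, hrange, Stmt8.Fc_inf, Stmt8.finrank_Fc]
      have hRr : Module.finrank F (LinearMap.range (X ^ s))
          = Stmt8.NcardF r d (fun j => j - s) := by
        rw [hrange, Stmt8.finrank_Fc]
      have h5 := Stmt8.numeric5 (r := r) (d := d) c s
      have hT := Stmt8.NcardF_telescope (r := r) (d := d) c s
      have h6 : Module.finrank F (E (k+1) ⊓ (LinearMap.range (X ^ s) ⊔ E k) : Submodule F V)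
          ≤ Module.finrank F (E (k+1)) := Submodule.finrank_mono inf_le_left
      have hAle : E (k+1) ≤ LinearMap.range (X ^ s) ⊔ E k := by
        have h7 : Module.finrank F (E (k+1))
            ≤ Module.finrank F (E (k+1) ⊓ (LinearMap.range (X ^ s) ⊔ E k) : Submodule F V) := by
          have t1 : Module.finrank F (E (k+1)) = Stmt8.NcardF r d c + af (k+1) := by omega
          have t2 : Module.finrank F (E (k+1))
              + (∑ u ∈ Finset.Icc 1 s, Stmt8.DbarF r d c u)
              ≤ Module.finrank F
                (Submodule.comap (X ^ s) (E (k+1)) ⊓ (⊤ : Submodule F V) : Submodule F V) := by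
            omega
          have t3 : Stmt8.NcardF r d c + (∑ u ∈ Finset.Icc 1 s, Stmt8.DbarF r d c u)
              = Stmt8.NcardF r d (fun j => c j + s) := by omega
          have t4 : Module.finrank F (⊤ : Submodule F V)
              + Stmt8.NcardF r d (fun j => min (c j) (j - s))
              ≤ Stmt8.NcardF r d (fun j => c j + s)
              + Module.finrank F (LinearMap.range (X ^ s)) := by omega
          omega
        have h8 := Submodule.eq_of_le_of_finrank_le
          (inf_le_left : E (k+1) ⊓ (LinearMap.range (X ^ s) ⊔ E k) ≤ E (k+1)) h7
        rw [← h8]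
        exact inf_le_right
      -- the new bound function
      set c' : ℕ → ℕ := fun j => if c j + m ≤ j then c j + 1 else c j with hc'
      have hcomapB : Submodule.comap X (E k) = Stmt8.Fc e (fun j => c j + 1) := by
        rw [hEk]
        exact Stmt8.comap_X_Fc e X hX0 hXs c
      have hGeq : Submodule.comap X (E k) ⊓ (LinearMap.range (X ^ s) ⊔ E k)
          = Stmt8.Fc e c' := by
        rw [hcomapB, hEk, hrange, Stmt8.Fc_sup, Stmt8.Fc_inf]
        apply Stmt8.Fc_congr
        intro j
        rw [hc']
        beta_reduce
        split_ifs with h <;> omega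
      have hAcomap : E (k+1) ≤ Submodule.comap X (E k) := by
        intro v hv
        exact hEX (k+1) (by omega) (by omega) v hv
      have hGsub : E (k+1) ≤ Submodule.comap X (E k) ⊓ (LinearMap.range (X ^ s) ⊔ E k) :=
        le_inf hAcomap hAle
      have hrkG : Module.finrank F
            (Submodule.comap X (E k) ⊓ (LinearMap.range (X ^ s) ⊔ E k) : Submodule F V)
          ≤ Module.finrank F (E (k+1)) := by
        rw [hGeq, Stmt8.finrank_Fc, hc', Stmt8.Ncard_cprime c m hm1n.1, hrkA, hrkB, hma]
      have hEk1 : E (k+1) = Stmt8.Fc e c' := by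
        rw [← hGeq]
        exact Submodule.eq_of_le_of_finrank_le hGsub hrkG
      refine ⟨c', hEk1, ?_⟩
      have hup := Stmt8.multiset_update (r := r) (d := d) c (r-k) m hm1n.1 hm1n.2
      rw [show r - (k+1) = r - k - 1 by omega, show k+1+1 = k+2 by omega, hc', hup]
      exact hrest
  intro k hk
  obtain ⟨c, hc, _⟩ := main k hk
  exact ⟨{x : RIdx r d | x.val.1 ≤ c x.val.2.1}, hc⟩
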